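/- Let p ≥ 2 and r > 2 be real numbers. Then for every ε > 0 there exists a real sequence (x_n)_{n≥1} with 0 < ∑_{n=1}^∞ |x_n|^p < ∞ such that, with y_n = (1/n)·∑_{k=1}^n x_k, one has ∑_{n=1}^∞ |y_n - x_n|^p ≥ (r^p/((pr-1) + (r-1)^p) - ε) · ∑_{n=1}^∞ |x_n|^p. (Such sequences are given by x_n = -m^{-r} for n ≤ m and x_n = (n-1)^{1-r} - n^{1-r} for n > m, as m → ∞.) -/

import Mathlib

open Filter Finset Real Topology

set_option maxHeartbeats 1000000


-- helper: A * A^(-u) = A^(1-u)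
lemma mul_rpow_neg {A : ℝ} (hA : 0 < A) (u : ℝ) : A * A ^ (-u) = A ^ (1 - u) := by
  rw [Real.rpow_sub hA, Real.rpow_one, Real.rpow_neg hA.le, div_eq_mul_inv]

lemma bern_low {t a : ℝ} (ht : 2 ≤ t) (ha : 1 ≤ a) :
    (t - 1) * (a + 1) ^ (-t) ≤ a ^ (1 - t) - (a + 1) ^ (1 - t) := by
  have ha0 : 0 < a := lt_of_lt_of_le one_pos ha
  have ha1 : 0 < a + 1 := by linarith
  have hP : 0 < (a + 1) ^ t := Real.rpow_pos_of_pos ha1 t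
  have hbern : 1 + t * (1 / a) ≤ (1 + 1 / a) ^ t := by
    apply one_add_mul_self_le_rpow_one_add _ (by linarith)
    have : (0:ℝ) ≤ 1 / a := by positivity
    linarith
  have h1 : a ^ (1 - t) * (a + 1) ^ t = a * (1 + 1 / a) ^ t := by
    rw [show (1 : ℝ) + 1 / a = (a + 1) / a by field_simp,
      Real.div_rpow ha1.le ha0.le t, Real.rpow_sub ha0, Real.rpow_one]
    field_simp
  have key : a + t ≤ a ^ (1 - t) * (a + 1) ^ t := by
    rw [h1]
    have := mul_le_mul_of_nonneg_left hbern ha0.le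
    calc a + t = a * (1 + t * (1 / a)) := by field_simp
      _ ≤ a * (1 + 1 / a) ^ t := this
  have e1 : (a + 1) ^ (-t) = ((a + 1) ^ t)⁻¹ := Real.rpow_neg ha1.le t
  have e2 : (a + 1) ^ (1 - t) = (a + 1) * ((a + 1) ^ t)⁻¹ := by
    rw [Real.rpow_sub ha1, Real.rpow_one, div_eq_mul_inv]
  have key2 : (a + t) * ((a + 1) ^ t)⁻¹ ≤ a ^ (1 - t) := by
    rw [← div_eq_mul_inv, div_le_iff₀ hP]; exact key
  rw [e1, e2]
  nlinarith [key2]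

lemma bern_high {t a : ℝ} (ht : 2 ≤ t) (ha : 1 ≤ a) :
    a ^ (1 - t) - (a + 1) ^ (1 - t) ≤ (t - 1) * a ^ (-t) := by
  have ha0 : 0 < a := lt_of_lt_of_le one_pos ha
  have ha1 : 0 < a + 1 := by linarith
  have hQ : 0 < a ^ t := Real.rpow_pos_of_pos ha0 t
  have hR : 0 < (a + 1) ^ t := Real.rpow_pos_of_pos ha1 t
  have hbern : 1 + t * (-(1 / (a + 1))) ≤ (1 + -(1 / (a + 1))) ^ t := by
    apply one_add_mul_self_le_rpow_one_add _ (by linarith)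
    have : 1 / (a + 1) ≤ 1 := by rw [div_le_one ha1]; linarith
    linarith
  have e0 : (1 : ℝ) + -(1 / (a + 1)) = a / (a + 1) := by field_simp; ring
  have e1 : (a / (a + 1)) ^ t = a ^ t / (a + 1) ^ t := Real.div_rpow ha0.le ha1.le t
  have key2 : 1 - t / (a + 1) ≤ a ^ t / (a + 1) ^ t := by
    calc 1 - t / (a + 1) = 1 + t * (-(1 / (a + 1))) := by ring
      _ ≤ (1 + -(1 / (a + 1))) ^ t := hbern
      _ = a ^ t / (a + 1) ^ t := by rw [e0, e1]
  -- goal in terms of inverses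
  have eA : a ^ (1 - t) = a * (a ^ t)⁻¹ := by
    rw [Real.rpow_sub ha0, Real.rpow_one, div_eq_mul_inv]
  have eB : (a + 1) ^ (1 - t) = (a + 1) * ((a + 1) ^ t)⁻¹ := by
    rw [Real.rpow_sub ha1, Real.rpow_one, div_eq_mul_inv]
  have eC : a ^ (-t) = (a ^ t)⁻¹ := Real.rpow_neg ha0.le t
  rw [eA, eB, eC]
  -- key2 * (a+1) : (a+1) - t ≤ (a+1) * a^t / (a+1)^t
  have key3 : (a + 1 - t) ≤ (a + 1) * (a ^ t / (a + 1) ^ t) := by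
    have := mul_le_mul_of_nonneg_left key2 ha1.le
    calc a + 1 - t = (a + 1) * (1 - t / (a + 1)) := by field_simp
      _ ≤ (a + 1) * (a ^ t / (a + 1) ^ t) := this
  -- multiply key3 by (a^t)⁻¹ > 0
  have key4 : (a + 1 - t) * (a ^ t)⁻¹ ≤ (a + 1) * ((a + 1) ^ t)⁻¹ := by
    have h := mul_le_mul_of_nonneg_right key3 (inv_nonneg.2 hQ.le)
    calc (a + 1 - t) * (a ^ t)⁻¹ ≤ (a + 1) * (a ^ t / (a + 1) ^ t) * (a ^ t)⁻¹ := h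
      _ = (a + 1) * ((a + 1) ^ t)⁻¹ := by field_simp
  nlinarith [key4]

lemma hasSum_tele (b : ℕ → ℝ) (hmono : ∀ n, b (n + 1) ≤ b n)
    (h0 : Tendsto b atTop (nhds 0)) :
    HasSum (fun n => b n - b (n + 1)) (b 0) := by
  have hanti : Antitone b := antitone_nat_of_succ_le hmono
  have hb0 : ∀ n, 0 ≤ b n := fun n =>
    le_of_tendsto h0 (eventually_atTop.2 ⟨n, fun m hm => hanti hm⟩)
  have hsum : Summable (fun n => b n - b (n + 1)) := by
    apply summable_of_sum_range_le (c := b 0) (fun n => sub_nonneg.2 (hmono n))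
    intro n
    rw [Finset.sum_range_sub' b n]
    linarith [hb0 n]
  have h2 : Tendsto (fun n => ∑ i ∈ Finset.range n, (b i - b (i + 1))) atTop (nhds (b 0)) := by
    simp only [Finset.sum_range_sub' b]
    simpa using tendsto_const_nhds.sub h0
  have h3 : (∑' n, (b n - b (n + 1))) = b 0 :=
    tendsto_nhds_unique hsum.hasSum.tendsto_sum_nat h2
  exact h3 ▸ hsum.hasSum




-- telescoping sum for shifted rpow sequence
lemma hasSum_rpow_tele {t : ℝ} (ht : 2 ≤ t) {c : ℝ} (hc : 1 ≤ c) :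
    HasSum (fun n : ℕ => (c + n) ^ (1 - t) - (c + n + 1) ^ (1 - t)) (c ^ (1 - t)) := by
  have h := hasSum_tele (fun n : ℕ => (c + n) ^ (1 - t))
    (fun n => by
      push_cast
      apply Real.rpow_le_rpow_of_nonpos (by positivity) (by linarith) (by linarith))
    (by
      have h1 : Tendsto (fun x : ℝ => x ^ (-(t - 1))) atTop (nhds 0) :=
        tendsto_rpow_neg_atTop (by linarith)
      have h2 : Tendsto (fun n : ℕ => c + (n : ℝ)) atTop atTop :=
        tendsto_atTop_add_const_left atTop c tendsto_natCast_atTop_atTop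
      have := h1.comp h2
      simpa [Function.comp_def, show -(t - 1) = 1 - t by ring] using this)
  have e : (c:ℝ) + (0:ℕ) = c := by norm_num
  rw [show c ^ (1-t) = (c + (0:ℕ)) ^ (1-t) by rw [e]]
  refine h.congr_fun (fun n => ?_)
  push_cast
  ring_nf


lemma tail_bounds {t : ℝ} (ht : 2 ≤ t) {m : ℕ} (hm : 1 ≤ m) :
    Summable (fun n : ℕ => ((m : ℝ) + n + 1) ^ (-t)) ∧
    ((m : ℝ) + 1) ^ (1 - t) / (t - 1) ≤ (∑' n : ℕ, ((m : ℝ) + n + 1) ^ (-t)) ∧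
    (∑' n : ℕ, ((m : ℝ) + n + 1) ^ (-t)) ≤ (m : ℝ) ^ (1 - t) / (t - 1) := by
  have hM : (1 : ℝ) ≤ (m : ℝ) := by exact_mod_cast hm
  have ht1 : (0 : ℝ) < t - 1 := by linarith
  set f : ℕ → ℝ := fun n => ((m : ℝ) + n + 1) ^ (-t) with hf
  have hfnn : ∀ n, 0 ≤ f n := fun n => Real.rpow_nonneg (by positivity) _
  have hg := hasSum_rpow_tele ht hM
  have hg' := hasSum_rpow_tele ht (show (1:ℝ) ≤ (m:ℝ) + 1 by linarith)
  have hlow : ∀ n : ℕ, (t - 1) * f n ≤ ((m : ℝ) + n) ^ (1 - t) - ((m : ℝ) + n + 1) ^ (1 - t) :=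
    fun n => bern_low ht (by have : (0:ℝ) ≤ n := Nat.cast_nonneg n; linarith)
  have hhigh : ∀ n : ℕ,
      ((m : ℝ) + 1 + n) ^ (1 - t) - ((m : ℝ) + 1 + n + 1) ^ (1 - t) ≤ (t - 1) * f n := by
    intro n
    have := bern_high ht (a := (m : ℝ) + n + 1)
      (by have : (0:ℝ) ≤ n := Nat.cast_nonneg n; linarith)
    calc ((m : ℝ) + 1 + n) ^ (1 - t) - ((m : ℝ) + 1 + n + 1) ^ (1 - t)
        = ((m : ℝ) + n + 1) ^ (1 - t) - (((m : ℝ) + n + 1) + 1) ^ (1 - t) := by ring_nf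
      _ ≤ (t - 1) * f n := this
  have hsum1 : Summable (fun n => (t - 1) * f n) :=
    Summable.of_nonneg_of_le (fun n => by positivity) hlow hg.summable
  have hsumf : Summable f := by
    have := hsum1.mul_left (t - 1)⁻¹
    refine this.congr (fun n => ?_)
    field_simp
  refine ⟨hsumf, ?_, ?_⟩
  · -- lower bound
    have h1 : ((m : ℝ) + 1) ^ (1 - t) ≤ (t - 1) * ∑' n, f n := by
      rw [← hg'.tsum_eq, ← tsum_mul_left]
      exact Summable.tsum_le_tsum hhigh hg'.summable (hsumf.mul_left _)
    rw [div_le_iff₀ ht1]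
    linarith [h1]
  · -- upper bound
    have h1 : (t - 1) * ∑' n, f n ≤ (m : ℝ) ^ (1 - t) := by
      rw [← hg.tsum_eq, ← tsum_mul_left]
      exact Summable.tsum_le_tsum hlow (hsumf.mul_left _) hg.summable
    rw [le_div_iff₀ ht1]
    linarith [h1]

lemma choose_m (p r ε : ℝ) (hp : 2 ≤ p) (hr : 2 < r) (hε : 0 < ε) :
    ∃ m : ℕ, 1 ≤ m ∧
      (r ^ p / ((p * r - 1) + (r - 1) ^ p) - ε) *
          ((m : ℝ) * (m : ℝ) ^ (-(p * r)) +
            (r - 1) ^ p * ((m : ℝ) ^ (-(p * r)) + (m : ℝ) ^ (1 - p * r) / (p * r - 1)))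
        ≤ r ^ p * ((m : ℝ) + 1) ^ (1 - p * r) / (p * r - 1) := by
  have hs4 : (4 : ℝ) ≤ p * r := by nlinarith
  have hs1 : (0 : ℝ) < p * r - 1 := by linarith
  have hA : (0 : ℝ) ≤ (r - 1) ^ p := Real.rpow_nonneg (by linarith) p
  have hrp : (0 : ℝ) < r ^ p := Real.rpow_pos_of_pos (by linarith) p
  set C : ℝ := r ^ p / ((p * r - 1) + (r - 1) ^ p) with hC
  set num : ℕ → ℝ := fun m => r ^ p * (1 + 1 / (m : ℝ)) ^ (1 - p * r) / (p * r - 1) with hnum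
  set den : ℕ → ℝ := fun m => 1 + (r - 1) ^ p * (1 / (m : ℝ) + 1 / (p * r - 1)) with hden
  have hinv : Tendsto (fun m : ℕ => 1 / (m : ℝ)) atTop (nhds 0) :=
    tendsto_one_div_atTop_nhds_zero_nat
  have hbase : Tendsto (fun m : ℕ => 1 + 1 / (m : ℝ)) atTop (nhds 1) := by
    simpa using tendsto_const_nhds.add hinv
  have hpow : Tendsto (fun m : ℕ => (1 + 1 / (m : ℝ)) ^ (1 - p * r)) atTop (nhds 1) := by
    have hc : ContinuousAt (fun x : ℝ => x ^ (1 - p * r)) 1 :=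
      Real.continuousAt_rpow_const 1 (1 - p * r) (Or.inl one_ne_zero)
    have := hc.tendsto.comp hbase
    simpa [Function.comp_def, Real.one_rpow] using this
  have hnumlim : Tendsto num atTop (nhds (r ^ p / (p * r - 1))) := by
    have := (hpow.const_mul (r ^ p)).div_const (p * r - 1)
    simpa [hnum, mul_one] using this
  have hdenlim : Tendsto den atTop (nhds (1 + (r - 1) ^ p * (0 + 1 / (p * r - 1)))) := by
    apply tendsto_const_nhds.add
    exact ((hinv.add tendsto_const_nhds).const_mul _)
  have hdenlim' : (1 : ℝ) + (r - 1) ^ p * (0 + 1 / (p * r - 1)) ≠ 0 := by positivity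
  have hratio : Tendsto (fun m => num m / den m) atTop (nhds C) := by
    have := hnumlim.div hdenlim hdenlim'
    have heq : r ^ p / (p * r - 1) / (1 + (r - 1) ^ p * (0 + 1 / (p * r - 1))) = C := by
      rw [hC]
      field_simp
      ring
    rwa [heq] at this
  have hev : ∀ᶠ m : ℕ in atTop, C - ε < num m / den m :=
    hratio.eventually_const_lt (by linarith)
  obtain ⟨m, hm⟩ := (hev.and (eventually_ge_atTop 1)).exists
  obtain ⟨hlt, hm1⟩ := hm
  refine ⟨m, hm1, ?_⟩
  have hM0 : (0 : ℝ) < (m : ℝ) := by exact_mod_cast hm1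
  have hdenpos : 0 < den m := by
    have : (0:ℝ) < 1 / (m:ℝ) := by positivity
    have : (0:ℝ) < 1 / (p * r - 1) := by positivity
    rw [hden]
    positivity
  have h1 : (C - ε) * den m ≤ num m := by
    rw [← le_div_iff₀ hdenpos]
    exact hlt.le
  have hMpow : (0 : ℝ) < (m : ℝ) ^ (1 - p * r) := Real.rpow_pos_of_pos hM0 _
  have h2 : (C - ε) * den m * (m : ℝ) ^ (1 - p * r) ≤ num m * (m : ℝ) ^ (1 - p * r) :=
    mul_le_mul_of_nonneg_right h1 hMpow.le
  have e1 : (m : ℝ) ^ (1 - p * r) = (m : ℝ) * (m : ℝ) ^ (-(p * r)) :=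
    (mul_rpow_neg hM0 _).symm
  have iden1 : den m * (m : ℝ) ^ (1 - p * r) =
      (m : ℝ) * (m : ℝ) ^ (-(p * r)) +
        (r - 1) ^ p * ((m : ℝ) ^ (-(p * r)) + (m : ℝ) ^ (1 - p * r) / (p * r - 1)) := by
    rw [hden]
    rw [e1]
    field_simp
  have e2 : ((m : ℝ) + 1) ^ (1 - p * r) =
      (1 + 1 / (m : ℝ)) ^ (1 - p * r) * (m : ℝ) ^ (1 - p * r) := by
    rw [← Real.mul_rpow (by positivity) hM0.le]
    congr 1
    field_simp
  have iden2 : num m * (m : ℝ) ^ (1 - p * r) =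
      r ^ p * ((m : ℝ) + 1) ^ (1 - p * r) / (p * r - 1) := by
    rw [hnum, e2]
    ring
  calc (C - ε) * ((m : ℝ) * (m : ℝ) ^ (-(p * r)) +
        (r - 1) ^ p * ((m : ℝ) ^ (-(p * r)) + (m : ℝ) ^ (1 - p * r) / (p * r - 1)))
      = (C - ε) * den m * (m : ℝ) ^ (1 - p * r) := by rw [mul_assoc, iden1]
    _ ≤ num m * (m : ℝ) ^ (1 - p * r) := h2
    _ = r ^ p * ((m : ℝ) + 1) ^ (1 - p * r) / (p * r - 1) := iden2





theorem stmt17 (p r : ℝ) (hp : 2 ≤ p) (hr : 2 < r) (ε : ℝ) (hε : 0 < ε) :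
    ∃ x : ℕ → ℝ,
      (Summable fun n : ℕ => |x (n + 1)| ^ p) ∧
      0 < ∑' n : ℕ, |x (n + 1)| ^ p ∧
      (r ^ p / ((p * r - 1) + (r - 1) ^ p) - ε) * ∑' n : ℕ, |x (n + 1)| ^ p ≤
        ∑' n : ℕ,
          |(1 / ((n : ℝ) + 1)) * (∑ k ∈ Finset.range (n + 1), x (k + 1)) - x (n + 1)| ^ p := by
  obtain ⟨m, hm1, hmineq⟩ := choose_m p r ε hp hr hε
  have hM0 : (0 : ℝ) < (m : ℝ) := by exact_mod_cast hm1
  have hM1 : (1 : ℝ) ≤ (m : ℝ) := by exact_mod_cast hm1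
  have hp0 : (0 : ℝ) < p := by linarith
  have hr1 : (1 : ℝ) < r := by linarith
  have hs2 : (2 : ℝ) ≤ p * r := by nlinarith
  have hs1 : (0 : ℝ) < p * r - 1 := by linarith
  have hrp : (0 : ℝ) < r ^ p := Real.rpow_pos_of_pos (by linarith) p
  have hA : (0 : ℝ) ≤ (r - 1) ^ p := Real.rpow_nonneg (by linarith) p
  set x : ℕ → ℝ := fun k =>
    if k ≤ m then -((m : ℝ) ^ (-r)) else ((k : ℝ) - 1) ^ (1 - r) - (k : ℝ) ^ (1 - r) with hxdef
  have hx_le : ∀ k : ℕ, k ≤ m → x k = -((m : ℝ) ^ (-r)) := fun k h => if_pos h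
  have hx_gt : ∀ k : ℕ, m < k → x k = ((k : ℝ) - 1) ^ (1 - r) - (k : ℝ) ^ (1 - r) :=
    fun k h => if_neg (not_le.2 h)
  -- the tail value of x in convenient form
  have hxd : ∀ n : ℕ, m ≤ n → x (n + 1) = (n : ℝ) ^ (1 - r) - ((n : ℝ) + 1) ^ (1 - r) := by
    intro n h
    rw [hx_gt (n + 1) (by omega)]
    push_cast
    rw [show (n : ℝ) + 1 - 1 = (n : ℝ) by ring]
  have hn1 : ∀ n : ℕ, m ≤ n → (1 : ℝ) ≤ (n : ℝ) := by
    intro n h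
    exact_mod_cast le_trans hm1 h
  -- partial sums
  have hsum : ∀ N : ℕ, ∑ k ∈ Finset.range N, x (k + 1) =
      if N ≤ m then -(N : ℝ) * (m : ℝ) ^ (-r) else -((N : ℝ) ^ (1 - r)) := by
    intro N
    induction N with
    | zero => simp [Nat.zero_le]
    | succ N ih =>
      rw [Finset.sum_range_succ, ih]
      by_cases h1 : N + 1 ≤ m
      · rw [if_pos (le_trans (Nat.le_succ N) h1), if_pos h1, hx_le (N + 1) h1]
        push_cast
        ring
      · rw [if_neg h1]
        have hmN : m ≤ N := by omega
        rw [hxd N hmN]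
        by_cases h2 : N ≤ m
        · have h3 : N = m := le_antisymm h2 hmN
          rw [if_pos h2, h3]
          have e : (m : ℝ) * (m : ℝ) ^ (-r) = (m : ℝ) ^ (1 - r) := mul_rpow_neg hM0 r
          push_cast
          linarith [e]
        · rw [if_neg h2]
          push_cast
          ring
  -- denominator terms
  set v : ℕ → ℝ := fun n => |x (n + 1)| ^ p with hvdef
  have hv_nonneg : ∀ n, 0 ≤ v n := fun n => Real.rpow_nonneg (abs_nonneg _) p
  have hv_head : ∀ n : ℕ, n + 1 ≤ m → v n = (m : ℝ) ^ (-(p * r)) := by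
    intro n h
    rw [hvdef]
    simp only
    rw [hx_le (n + 1) h, abs_neg, abs_of_pos (Real.rpow_pos_of_pos hM0 _),
      ← Real.rpow_mul hM0.le]
    rw [show -r * p = -(p * r) by ring]
  have hx_tail_low : ∀ n : ℕ, m ≤ n → (r - 1) * ((n : ℝ) + 1) ^ (-r) ≤ x (n + 1) := by
    intro n h
    rw [hxd n h]
    exact bern_low hr.le (hn1 n h)
  have hx_tail_high : ∀ n : ℕ, m ≤ n → x (n + 1) ≤ (r - 1) * (n : ℝ) ^ (-r) := by
    intro n h
    rw [hxd n h]
    exact bern_high hr.le (hn1 n h)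
  have hx_tail_nonneg : ∀ n : ℕ, m ≤ n → 0 ≤ x (n + 1) := by
    intro n h
    have := hx_tail_low n h
    have h2 : (0:ℝ) < ((n : ℝ) + 1) ^ (-r) := Real.rpow_pos_of_pos (by positivity) _
    nlinarith
  have hv_tail_le : ∀ n : ℕ, m ≤ n → v n ≤ (r - 1) ^ p * (n : ℝ) ^ (-(p * r)) := by
    intro n h
    have hn0 : (0:ℝ) < (n:ℝ) := lt_of_lt_of_le one_pos (hn1 n h)
    rw [hvdef]
    simp only
    rw [abs_of_nonneg (hx_tail_nonneg n h)]
    calc x (n + 1) ^ p ≤ ((r - 1) * (n : ℝ) ^ (-r)) ^ p :=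
          Real.rpow_le_rpow (hx_tail_nonneg n h) (hx_tail_high n h) hp0.le
      _ = (r - 1) ^ p * (n : ℝ) ^ (-(p * r)) := by
          rw [Real.mul_rpow (by linarith) (Real.rpow_nonneg hn0.le _), ← Real.rpow_mul hn0.le,
            show -r * p = -(p * r) by ring]
  -- summability helpers
  have hTB := tail_bounds hs2 hm1
  have hsummand : Summable (fun n : ℕ => ((m : ℝ) + n) ^ (-(p * r))) := by
    rw [← summable_nat_add_iff 1]
    apply hTB.1.congr
    intro n
    push_cast
    ring_nf
  have hv : Summable v := by
    rw [← summable_nat_add_iff m]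
    refine Summable.of_nonneg_of_le (fun n => hv_nonneg _) (fun n => ?_)
      (hsummand.mul_left ((r - 1) ^ p))
    calc v (n + m) ≤ (r - 1) ^ p * ((n + m : ℕ) : ℝ) ^ (-(p * r)) :=
          hv_tail_le (n + m) (Nat.le_add_left m n)
      _ = (r - 1) ^ p * ((m : ℝ) + n) ^ (-(p * r)) := by push_cast; ring_nf
  have hv' : Summable (fun n : ℕ => v (n + m)) := (summable_nat_add_iff m).2 hv
  have hbound1 : Summable (fun n : ℕ => (r - 1) ^ p * ((m : ℝ) + n) ^ (-(p * r))) :=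
    hsummand.mul_left _
  -- tsum of the tail of the shifted summand
  have htsum_split : (∑' n : ℕ, ((m : ℝ) + n) ^ (-(p * r))) =
      (m : ℝ) ^ (-(p * r)) + ∑' n : ℕ, ((m : ℝ) + n + 1) ^ (-(p * r)) := by
    rw [Summable.tsum_eq_zero_add hsummand]
    congr 1
    · norm_num
    · apply tsum_congr
      intro n
      push_cast
      ring_nf
  -- denominator upper bound
  have hD_ub : (∑' n, v n) ≤ (m : ℝ) * (m : ℝ) ^ (-(p * r)) +
      (r - 1) ^ p * ((m : ℝ) ^ (-(p * r)) + (m : ℝ) ^ (1 - p * r) / (p * r - 1)) := by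
    rw [← Summable.sum_add_tsum_nat_add m hv]
    have hhead : ∑ i ∈ Finset.range m, v i = (m : ℝ) * (m : ℝ) ^ (-(p * r)) := by
      rw [Finset.sum_congr rfl (fun i hi => hv_head i (Finset.mem_range.1 hi)),
        Finset.sum_const, Finset.card_range, nsmul_eq_mul]
    rw [hhead]
    have htail : (∑' n : ℕ, v (n + m)) ≤
        (r - 1) ^ p * ((m : ℝ) ^ (-(p * r)) + (m : ℝ) ^ (1 - p * r) / (p * r - 1)) := by
      have h1 : (∑' n : ℕ, v (n + m)) ≤
          ∑' n : ℕ, (r - 1) ^ p * ((m : ℝ) + n) ^ (-(p * r)) := by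
        refine Summable.tsum_le_tsum (fun n => ?_) hv' hbound1
        calc v (n + m) ≤ (r - 1) ^ p * ((n + m : ℕ) : ℝ) ^ (-(p * r)) :=
              hv_tail_le (n + m) (Nat.le_add_left m n)
          _ = (r - 1) ^ p * ((m : ℝ) + n) ^ (-(p * r)) := by push_cast; ring_nf
      rw [tsum_mul_left, htsum_split] at h1
      have h2 := hTB.2.2
      calc (∑' n : ℕ, v (n + m)) ≤ (r - 1) ^ p *
            ((m : ℝ) ^ (-(p * r)) + ∑' n : ℕ, ((m : ℝ) + n + 1) ^ (-(p * r))) := h1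
        _ ≤ (r - 1) ^ p * ((m : ℝ) ^ (-(p * r)) + (m : ℝ) ^ (1 - p * r) / (p * r - 1)) := by
            apply mul_le_mul_of_nonneg_left _ hA
            linarith [h2]
    linarith [htail]
  -- denominator positivity
  have hD_pos : 0 < ∑' n, v n := by
    apply Summable.tsum_pos hv hv_nonneg 0
    rw [hv_head 0 hm1]
    exact Real.rpow_pos_of_pos hM0 _
  -- numerator terms
  set w : ℕ → ℝ := fun n =>
    |(1 / ((n : ℝ) + 1)) * (∑ k ∈ Finset.range (n + 1), x (k + 1)) - x (n + 1)| ^ p with hwdef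
  have hw_nonneg : ∀ n, 0 ≤ w n := fun n => Real.rpow_nonneg (abs_nonneg _) p
  have hw_head : ∀ n : ℕ, n + 1 ≤ m → w n = 0 := by
    intro n h
    rw [hwdef]
    simp only
    rw [hsum (n + 1), if_pos h, hx_le (n + 1) h]
    have e : (1 / ((n : ℝ) + 1)) * (-((n + 1 : ℕ) : ℝ) * (m : ℝ) ^ (-r)) -
        (-((m : ℝ) ^ (-r))) = 0 := by
      push_cast
      field_simp
      ring
    rw [e, abs_zero, Real.zero_rpow (ne_of_gt hp0)]
  have hw_tail : ∀ n : ℕ, m ≤ n →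
      r ^ p * ((n : ℝ) + 1) ^ (-(p * r)) ≤ w n ∧ w n ≤ r ^ p * (n : ℝ) ^ (-(p * r)) := by
    intro n h
    have hn0 : (0:ℝ) < (n:ℝ) := lt_of_lt_of_le one_pos (hn1 n h)
    have hn10 : (0:ℝ) < (n:ℝ) + 1 := by linarith
    have h1 : ¬(n + 1 ≤ m) := by omega
    have hinner : (1 / ((n : ℝ) + 1)) * (∑ k ∈ Finset.range (n + 1), x (k + 1)) =
        -(((n : ℝ) + 1) ^ (-r)) := by
      rw [hsum (n + 1), if_neg h1]
      have e : ((n + 1 : ℕ) : ℝ) ^ (1 - r) = ((n : ℝ) + 1) * ((n : ℝ) + 1) ^ (-r) := by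
        push_cast
        exact (mul_rpow_neg hn10 r).symm
      push_cast at e ⊢
      rw [e]
      field_simp
    set D : ℝ := (n : ℝ) ^ (1 - r) - ((n : ℝ) + 1) ^ (1 - r) with hD
    set E : ℝ := ((n : ℝ) + 1) ^ (-r) with hE
    have hDlow : (r - 1) * E ≤ D := bern_low hr.le (hn1 n h)
    have hDhigh : D ≤ (r - 1) * (n : ℝ) ^ (-r) := bern_high hr.le (hn1 n h)
    have hE0 : 0 < E := Real.rpow_pos_of_pos hn10 _
    have hEn : E ≤ (n : ℝ) ^ (-r) :=
      Real.rpow_le_rpow_of_nonpos hn0 (by linarith) (by linarith)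
    have habs : |(1 / ((n : ℝ) + 1)) * (∑ k ∈ Finset.range (n + 1), x (k + 1)) - x (n + 1)| =
        D + E := by
      rw [hinner, hxd n h]
      rw [show -E - D = -(D + E) by ring, abs_neg]
      apply abs_of_nonneg
      nlinarith
    rw [hwdef]
    simp only
    rw [habs]
    constructor
    · calc r ^ p * ((n : ℝ) + 1) ^ (-(p * r)) = (r * E) ^ p := by
            rw [Real.mul_rpow (by linarith) hE0.le, hE, ← Real.rpow_mul hn10.le,
              show -r * p = -(p * r) by ring]
        _ ≤ (D + E) ^ p := Real.rpow_le_rpow (by positivity) (by nlinarith) hp0.le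
    · calc (D + E) ^ p ≤ (r * (n : ℝ) ^ (-r)) ^ p := by
            apply Real.rpow_le_rpow (by nlinarith) _ hp0.le
            nlinarith
        _ = r ^ p * (n : ℝ) ^ (-(p * r)) := by
            rw [Real.mul_rpow (by linarith) (Real.rpow_nonneg hn0.le _), ← Real.rpow_mul hn0.le,
              show -r * p = -(p * r) by ring]
  -- numerator summability
  have hw : Summable w := by
    rw [← summable_nat_add_iff m]
    refine Summable.of_nonneg_of_le (fun n => hw_nonneg _) (fun n => ?_)
      (hsummand.mul_left (r ^ p))
    calc w (n + m) ≤ r ^ p * ((n + m : ℕ) : ℝ) ^ (-(p * r)) :=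
          (hw_tail (n + m) (Nat.le_add_left m n)).2
      _ = r ^ p * ((m : ℝ) + n) ^ (-(p * r)) := by push_cast; ring_nf
  -- numerator lower bound
  have hN_lb : r ^ p * ((m : ℝ) + 1) ^ (1 - p * r) / (p * r - 1) ≤ ∑' n, w n := by
    rw [← Summable.sum_add_tsum_nat_add m hw]
    have hhead : ∑ i ∈ Finset.range m, w i = 0 :=
      Finset.sum_eq_zero (fun i hi => hw_head i (Finset.mem_range.1 hi))
    rw [hhead, zero_add]
    have h1 : (∑' n : ℕ, r ^ p * ((m : ℝ) + n + 1) ^ (-(p * r))) ≤ ∑' n : ℕ, w (n + m) := by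
      apply Summable.tsum_le_tsum _ (hTB.1.mul_left _) ((summable_nat_add_iff m).2 hw)
      intro n
      calc r ^ p * ((m : ℝ) + n + 1) ^ (-(p * r))
          = r ^ p * (((n + m : ℕ) : ℝ) + 1) ^ (-(p * r)) := by push_cast; ring_nf
        _ ≤ w (n + m) := (hw_tail (n + m) (Nat.le_add_left m n)).1
    rw [tsum_mul_left] at h1
    have h2 := hTB.2.1
    calc r ^ p * ((m : ℝ) + 1) ^ (1 - p * r) / (p * r - 1)
        = r ^ p * (((m : ℝ) + 1) ^ (1 - p * r) / (p * r - 1)) := by ring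
      _ ≤ r ^ p * ∑' n : ℕ, ((m : ℝ) + n + 1) ^ (-(p * r)) :=
          mul_le_mul_of_nonneg_left h2 hrp.le
      _ ≤ ∑' n : ℕ, w (n + m) := h1
  refine ⟨x, hv, hD_pos, ?_⟩
  set c : ℝ := r ^ p / ((p * r - 1) + (r - 1) ^ p) - ε with hc
  by_cases hcs : 0 ≤ c
  · calc c * ∑' n, v n ≤ c * ((m : ℝ) * (m : ℝ) ^ (-(p * r)) +
          (r - 1) ^ p * ((m : ℝ) ^ (-(p * r)) + (m : ℝ) ^ (1 - p * r) / (p * r - 1))) :=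
          mul_le_mul_of_nonneg_left hD_ub hcs
      _ ≤ r ^ p * ((m : ℝ) + 1) ^ (1 - p * r) / (p * r - 1) := hmineq
      _ ≤ ∑' n, w n := hN_lb
  · calc c * ∑' n, v n ≤ 0 := mul_nonpos_of_nonpos_of_nonneg (le_of_not_ge hcs) hD_pos.le
      _ ≤ ∑' n, w n := tsum_nonneg hw_nonneg
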